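/- arXiv:1112.1230 — 6 statements merged into one kernel-verified Lean document; each statement's English description precedes it below -/
import Mathlib

section
/- Let d_1, ..., d_n be pairwise coprime positive integers and D = d_1·...·d_n. Then there exist no positive integers m_1, ..., m_n such that ∑_{j=1}^n m_j·(D/d_j) = (n-1)·D. -/
/-- No positive integers `m j` satisfy `∑ j, m j * (D / d j) = (n-1) * D`
for pairwise coprime positive `d j` with product `D`. -/
theorem stmt0 (n : ℕ) (hn : 1 ≤ n) (d : Fin n → ℕ)
    (hpos : ∀ j, 0 < d j)
    (hcop : ∀ j k : Fin n, j ≠ k → Nat.Coprime (d j) (d k))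
    (D : ℕ) (hD : D = ∏ j, d j) :
    ¬ ∃ m : Fin n → ℕ, (∀ j, 0 < m j) ∧
      (∑ j, m j * (D / d j)) = (n - 1) * D := by
  rintro ⟨m, hm, hsum⟩
  have hDj : ∀ j, D = d j * ∏ k ∈ Finset.univ.erase j, d k := by
    intro j
    rw [hD, Finset.mul_prod_erase _ _ (Finset.mem_univ j)]
  have hdvdD : ∀ j, d j ∣ D := fun j => ⟨_, hDj j⟩
  have hdiv : ∀ j, D / d j = ∏ k ∈ Finset.univ.erase j, d k := by
    intro j
    rw [hDj j, Nat.mul_div_cancel_left _ (hpos j)]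
  have hcop' : ∀ j, Nat.Coprime (d j) (D / d j) := by
    intro j
    rw [hdiv]
    exact Nat.Coprime.prod_right fun k hk =>
      hcop j k (Finset.mem_erase.1 hk).1.symm
  have hDpos : 0 < D := by
    rw [hD]; exact Finset.prod_pos fun j _ => hpos j
  have key : ∀ j, d j ≤ m j := by
    intro j
    have h1 : (∑ k ∈ Finset.univ.erase j, m k * (D / d k)) + m j * (D / d j)
        = (n - 1) * D := by
      rw [Finset.sum_erase_add _ _ (Finset.mem_univ j)]; exact hsum
    have hd1 : d j ∣ ∑ k ∈ Finset.univ.erase j, m k * (D / d k) := by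
      refine Finset.dvd_sum fun k hk => dvd_mul_of_dvd_right ?_ _
      rw [hdiv]
      exact Finset.dvd_prod_of_mem _
        (Finset.mem_erase.2 ⟨(Finset.mem_erase.1 hk).1.symm, Finset.mem_univ _⟩)
    have hd2 : d j ∣ (∑ k ∈ Finset.univ.erase j, m k * (D / d k)) + m j * (D / d j) := by
      rw [h1]; exact (hdvdD j).mul_left _
    have hd3 : d j ∣ m j * (D / d j) := (Nat.dvd_add_right hd1).mp hd2
    have hd4 : d j ∣ m j := (hcop' j).dvd_of_dvd_mul_right hd3
    exact Nat.le_of_dvd (hm j) hd4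
  have hge : n * D ≤ ∑ j, m j * (D / d j) := by
    calc n * D = ∑ _j : Fin n, D := by simp [mul_comm]
    _ ≤ ∑ j, m j * (D / d j) := by
        refine Finset.sum_le_sum fun j _ => ?_
        calc D = d j * (D / d j) := (Nat.mul_div_cancel' (hdvdD j)).symm
        _ ≤ m j * (D / d j) := Nat.mul_le_mul_right _ (key j)
  rw [hsum] at hge
  have : (n - 1) * D < n * D :=
    (Nat.mul_lt_mul_right hDpos).mpr (by omega)
  omega
end

section
/- Let d_1, ..., d_n be pairwise coprime positive integers and D = d_1·...·d_n. If d is a positive integer dividing D that lies in the additive semigroup generated by D/d_1, ..., D/d_n (i.e., d = ∑_j m_j·(D/d_j) with all m_j nonnegative integers), then D/d_j divides d for some j ∈ {1,...,n}. -/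
private lemma aux_prod_dvd {ι : Type*} (s : Finset ι) (f : ι → ℕ) (e : ℕ)
    (hc : ∀ i ∈ s, ∀ j ∈ s, i ≠ j → Nat.Coprime (f i) (f j))
    (hd : ∀ i ∈ s, f i ∣ e) : (∏ i ∈ s, f i) ∣ e := by
  induction s using Finset.cons_induction with
  | empty => simp
  | cons a s ha ih =>
    rw [Finset.prod_cons]
    refine Nat.Coprime.mul_dvd_of_dvd_of_dvd ?_ (hd a (Finset.mem_cons_self a s)) (ih ?_ ?_)
    · exact Nat.Coprime.prod_right fun i hi =>
        hc a (Finset.mem_cons_self a s) i (Finset.mem_cons_of_mem hi)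
          (fun hai => ha (hai ▸ hi))
    · exact fun i hi j hj hij =>
        hc i (Finset.mem_cons_of_mem hi) j (Finset.mem_cons_of_mem hj) hij
    · exact fun i hi => hd i (Finset.mem_cons_of_mem hi)

/-- If a positive divisor `e` of `D` lies in the additive semigroup generated by
the `D / d j`, then `D / d j ∣ e` for some `j`. -/
theorem stmt1 (n : ℕ) (hn : 1 ≤ n) (d : Fin n → ℕ)
    (hpos : ∀ j, 0 < d j)
    (hcop : ∀ j k : Fin n, j ≠ k → Nat.Coprime (d j) (d k))
    (D : ℕ) (hD : D = ∏ j, d j)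
    (e : ℕ) (he : 0 < e) (hdvd : e ∣ D)
    (m : Fin n → ℕ) (hrep : e = ∑ j, m j * (D / d j)) :
    ∃ j, (D / d j) ∣ e := by
  by_contra hcon
  push_neg at hcon
  have hdj : ∀ j : Fin n, d j ∣ D := fun j => hD ▸ Finset.dvd_prod_of_mem d (Finset.mem_univ j)
  have hquot : ∀ j : Fin n, D / d j = ∏ k ∈ Finset.univ.erase j, d k := by
    intro j
    rw [hD, ← Finset.mul_prod_erase _ _ (Finset.mem_univ j),
      Nat.mul_div_cancel_left _ (hpos j)]
  have hDeq : ∀ j : Fin n, d j * (D / d j) = D := fun j => Nat.mul_div_cancel' (hdj j)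
  have hcq : ∀ j : Fin n, Nat.Coprime (d j) (D / d j) := by
    intro j
    rw [hquot j]
    exact Nat.Coprime.prod_right fun i hi => hcop j i (fun h => (Finset.mem_erase.1 hi).1 h.symm)
  have hdvdq : ∀ j k : Fin n, j ≠ k → d k ∣ D / d j := by
    intro j k hjk
    rw [hquot j]
    exact Finset.dvd_prod_of_mem d (Finset.mem_erase.2 ⟨fun h => hjk h.symm, Finset.mem_univ k⟩)
  -- Step 1: for each j, some k ≠ j with ¬ d k ∣ e
  have step1 : ∀ j : Fin n, ∃ k, k ≠ j ∧ ¬ d k ∣ e := by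
    intro j
    by_contra hco
    push_neg at hco
    refine hcon j ?_
    rw [hquot j]
    refine aux_prod_dvd _ _ _ (fun i hi k hk hik => hcop i k hik) (fun i hi => ?_)
    rcases eq_or_ne i j with rfl | hij
    · exact absurd hi (Finset.notMem_erase i _)
    · exact hco i hij
  obtain ⟨k1, _, hk1⟩ := step1 ⟨0, hn⟩
  obtain ⟨k2, hk21, hk2⟩ := step1 k1
  -- Step 2: for k with ¬ d k ∣ e, produce h with 2 ≤ h, h ∣ d k, e * h ∣ D, D ≤ e * h
  have step2 : ∀ k : Fin n, ¬ d k ∣ e → ∃ h : ℕ, 2 ≤ h ∧ h ∣ d k ∧ e * h ∣ D ∧ D ≤ e * h := by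
    intro k hk
    set g := Nat.gcd e (d k) with hgdef
    have hgdvde : g ∣ e := Nat.gcd_dvd_left e (d k)
    have hgdvdd : g ∣ d k := Nat.gcd_dvd_right e (d k)
    have hgpos : 0 < g := Nat.gcd_pos_of_pos_left _ he
    set h := d k / g with hhdef
    have hgh : g * h = d k := Nat.mul_div_cancel' hgdvdd
    have hgne : g ≠ d k := fun hh => hk (hh ▸ hgdvde)
    have h2 : 2 ≤ h := by
      have hne0 : h ≠ 0 := by
        intro h0
        rw [h0, mul_zero] at hgh
        exact (hpos k).ne' hgh.symm
      have hne1 : h ≠ 1 := by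
        intro h1
        rw [h1, mul_one] at hgh
        exact hgne hgh
      exact (Nat.two_le_iff h).2 ⟨hne0, hne1⟩
    refine ⟨h, h2, ⟨g, by rw [← hgh, mul_comm]⟩, ?_, ?_⟩
    · -- e * h ∣ D
      set e' := e / g with he'def
      have hee' : g * e' = e := Nat.mul_div_cancel' hgdvde
      have hcop' : Nat.Coprime e' h := Nat.coprime_div_gcd_div_gcd hgpos
      have he'dvd : e' ∣ h * (D / d k) := by
        obtain ⟨c, hc⟩ := hdvd
        refine ⟨c, ?_⟩
        have : g * (h * (D / d k)) = g * (e' * c) := by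
          rw [← mul_assoc, hgh, hDeq k, hc, ← hee', mul_assoc]
        exact Nat.eq_of_mul_eq_mul_left hgpos this
      have he'q : e' ∣ D / d k := (Nat.Coprime.dvd_of_dvd_mul_left hcop' he'dvd)
      obtain ⟨t, ht⟩ := he'q
      exact ⟨t, by rw [← hDeq k, ht, ← hee', ← hgh]; ring⟩
    · -- D ≤ e * h
      set r := ∑ j ∈ Finset.univ.erase k, m j * (D / d j) with hrdef
      have hsplit : e = m k * (D / d k) + r := by
        rw [hrep, ← Finset.add_sum_erase _ _ (Finset.mem_univ k)]
      have hdr : d k ∣ r := Finset.dvd_sum fun j hj =>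
        Dvd.dvd.mul_left (hdvdq j k (Finset.mem_erase.1 hj).1) (m j)
      have hgr : g ∣ r := hgdvdd.trans hdr
      have hgmu : g ∣ m k * (D / d k) := by
        have : m k * (D / d k) = e - r := by omega
        rw [this]; exact Nat.dvd_sub hgdvde hgr
      have hcopg : Nat.Coprime g (D / d k) := Nat.Coprime.coprime_dvd_left hgdvdd (hcq k)
      have hgm : g ∣ m k := (Nat.Coprime.dvd_of_dvd_mul_right hcopg hgmu)
      have hmne : m k ≠ 0 := by
        intro h0
        apply hk
        rw [hsplit, h0, zero_mul, zero_add]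
        exact hdr
      have hgle : g ≤ m k := Nat.le_of_dvd (Nat.pos_of_ne_zero hmne) hgm
      have hlow : g * (D / d k) ≤ e := le_trans (Nat.mul_le_mul_right _ hgle) (by omega)
      calc D = g * h * (D / d k) := by rw [hgh, hDeq k]
        _ = g * (D / d k) * h := by ring
        _ ≤ e * h := Nat.mul_le_mul_right _ hlow
  obtain ⟨h1, h12, h1d, h1dvd, h1le⟩ := step2 k1 hk1
  obtain ⟨h2, h22, h2d, h2dvd, _⟩ := step2 k2 hk2
  -- combine
  have hch : Nat.Coprime h1 h2 :=
    Nat.Coprime.coprime_dvd_left h1d (Nat.Coprime.coprime_dvd_right h2d (hcop k1 k2 (Ne.symm hk21)))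
  have hq1 : h1 ∣ D / e := by
    obtain ⟨s, hs⟩ := h1dvd
    exact ⟨s, by rw [hs, mul_assoc, Nat.mul_div_cancel_left _ he]⟩
  have hq2 : h2 ∣ D / e := by
    obtain ⟨s, hs⟩ := h2dvd
    exact ⟨s, by rw [hs, mul_assoc, Nat.mul_div_cancel_left _ he]⟩
  have hprod : h1 * h2 ∣ D / e := Nat.Coprime.mul_dvd_of_dvd_of_dvd hch hq1 hq2
  have hDepos : 0 < D / e := Nat.div_pos (Nat.le_of_dvd (by
    have : 0 < D := by rw [hD]; exact Finset.prod_pos fun j _ => hpos j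
    exact this) hdvd) he
  have hle1 : h1 * h2 ≤ D / e := Nat.le_of_dvd hDepos hprod
  have hle2 : D / e ≤ h1 := by
    have : D / e * e ≤ h1 * e := by
      rw [Nat.div_mul_cancel hdvd, mul_comm]; exact h1le
    exact Nat.le_of_mul_le_mul_right this he
  nlinarith [hle1, hle2, h12, h22]
end

section
/- Let d_1, ..., d_n be pairwise coprime positive integers, D their product, and d, m positive integers with d = ∑_j m_j·(D/d_j) where all m_j are nonnegative integers, d divides D, and at least two of the m_j are nonzero. Then a contradiction follows; equivalently, if d > 0 divides D and equals a nonnegative combination ∑_j m_j·(D/d_j), then exactly one m_j is nonzero. -/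
/-- If a positive divisor `e` of `D` equals a nonnegative combination
`∑ j, m j * (D / d j)`, then exactly one `m j` is nonzero. -/
theorem stmt2 (n : ℕ) (hn : 2 ≤ n) (d : Fin n → ℕ)
    (hpos : ∀ j, 0 < d j)
    (hcop : ∀ j k : Fin n, j ≠ k → Nat.Coprime (d j) (d k))
    (D : ℕ) (hD : D = ∏ j, d j)
    (e : ℕ) (he : 0 < e) (hdvd : e ∣ D)
    (m : Fin n → ℕ) (hrep : e = ∑ j, m j * (D / d j)) :
    ∃! j : Fin n, m j ≠ 0 := by
  classical
  set P : Fin n → ℕ := fun j => ∏ i ∈ Finset.univ.erase j, d i with hPdef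
  have hDP : ∀ j, D = d j * P j := by
    intro j
    rw [hD, hPdef, Finset.mul_prod_erase _ _ (Finset.mem_univ j)]
  have hquot : ∀ j, D / d j = P j := by
    intro j
    rw [hDP j, Nat.mul_div_cancel_left _ (hpos j)]
  have hrep' : e = ∑ j, m j * P j := by
    rw [hrep]; exact Finset.sum_congr rfl fun j _ => by rw [hquot]
  have hcopP : ∀ j, Nat.Coprime (d j) (P j) := by
    intro j
    exact Nat.Coprime.prod_right fun i hi =>
      hcop j i fun h => (Finset.mem_erase.mp hi).1 h.symm
  -- g j = gcd e (d j) divides m j when needed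
  have hgdvd : ∀ j, Nat.gcd e (d j) ∣ m j := by
    intro j
    have h1 : e = m j * P j + ∑ i ∈ Finset.univ.erase j, m i * P i := by
      rw [hrep', ← Finset.add_sum_erase _ _ (Finset.mem_univ j)]
    have h2 : Nat.gcd e (d j) ∣ ∑ i ∈ Finset.univ.erase j, m i * P i := by
      refine Finset.dvd_sum fun i hi => Dvd.dvd.trans ?_ (dvd_mul_left _ _)
      refine (Nat.gcd_dvd_right e (d j)).trans ?_
      exact Finset.dvd_prod_of_mem d
        (Finset.mem_erase.mpr ⟨fun h => (Finset.mem_erase.mp hi).1 h.symm, Finset.mem_univ _⟩)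
    have h3 : Nat.gcd e (d j) ∣ m j * P j := by
      have h4 : Nat.gcd e (d j) ∣ m j * P j + ∑ i ∈ Finset.univ.erase j, m i * P i := by
        rw [← h1]; exact Nat.gcd_dvd_left e (d j)
      exact (Nat.dvd_add_iff_left h2).mpr h4
    have hcg : Nat.Coprime (Nat.gcd e (d j)) (P j) :=
      Nat.Coprime.coprime_dvd_left (Nat.gcd_dvd_right e (d j)) (hcopP j)
    exact (Nat.Coprime.dvd_of_dvd_mul_right hcg) h3
  -- e divides gcd e (d j) * P j
  have hediv : ∀ j, e ∣ Nat.gcd e (d j) * P j := by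
    intro j
    exact Nat.dvd_gcd_mul_iff_dvd_mul.mpr (by rw [← hDP j]; exact hdvd)
  have hkey : ∀ j, m j ≠ 0 → e ≤ m j * P j := by
    intro j hm
    have h1 : e ≤ Nat.gcd e (d j) * P j := Nat.le_of_dvd
      (Nat.mul_pos (Nat.gcd_pos_of_pos_left _ he)
        (Finset.prod_pos fun i _ => hpos i)) (hediv j)
    have h2 : Nat.gcd e (d j) ≤ m j := Nat.le_of_dvd (Nat.pos_of_ne_zero hm) (hgdvd j)
    calc e ≤ Nat.gcd e (d j) * P j := h1
      _ ≤ m j * P j := Nat.mul_le_mul_right _ h2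
  -- existence
  have hex : ∃ j, m j ≠ 0 := by
    by_contra h
    push_neg at h
    rw [hrep'] at he
    simp [h] at he
  obtain ⟨j, hj⟩ := hex
  refine ⟨j, hj, fun k hk => ?_⟩
  by_contra hne
  have hsum : m k * P k + m j * P j ≤ ∑ i, m i * P i := by
    have : ({k, j} : Finset (Fin n)) ⊆ Finset.univ := Finset.subset_univ _
    calc m k * P k + m j * P j = ∑ i ∈ ({k, j} : Finset (Fin n)), m i * P i := by
          rw [Finset.sum_pair hne]
      _ ≤ ∑ i, m i * P i := Finset.sum_le_sum_of_subset this
  have h1 := hkey j hj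
  have h2 := hkey k hk
  rw [← hrep'] at hsum
  omega
end

section
/- Suppose N = A·M + d·M', N' = B·M' + d'·M, ν = A·i + d·i', ν' = B·i' + d'·i, and q = d·d' − A·B with q ≠ 0, where A, B, d, d' are positive integers and M, M', i, i', N, N', ν, ν' are integers (or rationals). Then as rational functions in s one has the identity q/((ν+sN)(ν'+sN')) = d/((ν+sN)(i+sM)) + d'/((ν'+sN')(i'+sM')) − 1/((i+sM)(i'+sM')), wherever all denominators are nonzero. -/
/-- The splice-edge partial fraction identity for topological zeta functions. -/
theorem stmt3 (A B d d' i i' M M' ν ν' N N' q s : ℚ)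
    (hA : 0 < A) (hB : 0 < B) (hd : 0 < d) (hd' : 0 < d')
    (hN : N = A * M + d * M') (hN' : N' = B * M' + d' * M)
    (hν : ν = A * i + d * i') (hν' : ν' = B * i' + d' * i)
    (hq : q = d * d' - A * B) (hq0 : q ≠ 0)
    (h1 : ν + s * N ≠ 0) (h2 : ν' + s * N' ≠ 0)
    (h3 : i + s * M ≠ 0) (h4 : i' + s * M' ≠ 0) :
    q / ((ν + s * N) * (ν' + s * N')) =
      d / ((ν + s * N) * (i + s * M)) + d' / ((ν' + s * N') * (i' + s * M'))
        - 1 / ((i + s * M) * (i' + s * M')) := by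
  subst hN hN' hν hν' hq
  field_simp
  ring
end

section
/- Let n ≥ 2, positive pairwise coprime integers d_1,...,d_n with product D, and integers i_1,...,i_n with the property that whenever d_ℓ divides i_ℓ for at least n−1 indices ℓ, then i_ℓ = d_ℓ for at least n−1 indices (allowedness for r=1), and all i_ℓ ≠ 0. Then i' := (1−n)·D + ∑_{ℓ=1}^n (D/d_ℓ)·i_ℓ is nonzero. -/
/-- For an allowed divisor on a star-shaped diagram with one arrowhead, the
induced multiplicity `i' = (1-n)D + ∑ (D/dℓ)·iℓ` is nonzero. -/
theorem stmt5 (n : ℕ) (hn : 2 ≤ n) (d : Fin n → ℕ)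
    (hpos : ∀ ℓ, 0 < d ℓ)
    (hcop : ∀ a b : Fin n, a ≠ b → Nat.Coprime (d a) (d b))
    (D : ℕ) (hD : D = ∏ ℓ, d ℓ)
    (i : Fin n → ℤ) (hi : ∀ ℓ, i ℓ ≠ 0)
    (hallow : (∃ S : Finset (Fin n), n - 1 ≤ S.card ∧ ∀ ℓ ∈ S, (d ℓ : ℤ) ∣ i ℓ) →
      ∃ T : Finset (Fin n), n - 1 ≤ T.card ∧ ∀ ℓ ∈ T, i ℓ = (d ℓ : ℤ)) :
    (1 - (n : ℤ)) * D + ∑ ℓ, ((D / d ℓ : ℕ) : ℤ) * i ℓ ≠ 0 := by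
  intro h
  have hDpos : 0 < D := hD ▸ Finset.prod_pos (fun ℓ _ => hpos ℓ)
  have hddvd : ∀ ℓ : Fin n, d ℓ ∣ D := fun ℓ =>
    hD ▸ Finset.dvd_prod_of_mem d (Finset.mem_univ ℓ)
  have hquot : ∀ ℓ : Fin n, (D / d ℓ : ℕ) = ∏ m ∈ Finset.univ.erase ℓ, d m := by
    intro ℓ
    rw [hD, ← Finset.prod_erase_mul _ _ (Finset.mem_univ ℓ)]
    exact Nat.mul_div_cancel _ (hpos ℓ)
  have hdvd : ∀ ℓ, (d ℓ : ℤ) ∣ i ℓ := by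
    intro ℓ
    have h1 : (d ℓ : ℤ) ∣ ((D / d ℓ : ℕ) : ℤ) * i ℓ := by
      have heq : ((D / d ℓ : ℕ) : ℤ) * i ℓ =
          -((1 - (n : ℤ)) * D) - ∑ k ∈ Finset.univ.erase ℓ, ((D / d k : ℕ) : ℤ) * i k := by
        rw [← Finset.sum_erase_add _ _ (Finset.mem_univ ℓ)] at h
        linarith
      rw [heq]
      apply dvd_sub
      · exact dvd_neg.mpr (Dvd.dvd.mul_left (Int.natCast_dvd_natCast.mpr (hddvd ℓ)) _)
      · apply Finset.dvd_sum
        intro k hk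
        have hk' : ℓ ∈ Finset.univ.erase k := by
          simp only [Finset.mem_erase, Finset.mem_univ, and_true] at hk ⊢
          exact fun e => hk e.symm
        have hdd : d ℓ ∣ D / d k := by
          rw [hquot k]; exact Finset.dvd_prod_of_mem d hk'
        exact Dvd.dvd.mul_right (Int.natCast_dvd_natCast.mpr hdd) _
    have hcop' : IsCoprime ((d ℓ : ℤ)) ((D / d ℓ : ℕ) : ℤ) := by
      rw [Int.isCoprime_iff_gcd_eq_one]
      have hc : Nat.Coprime (d ℓ) (D / d ℓ) := by
        rw [hquot ℓ]
        exact Nat.Coprime.prod_right fun m hm => hcop ℓ m (by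
          simp only [Finset.mem_erase, Finset.mem_univ, and_true] at hm
          exact fun e => hm e.symm)
      rw [Int.gcd_natCast_natCast]; exact hc
    exact hcop'.dvd_of_dvd_mul_left h1
  obtain ⟨T, hTcard, hT⟩ := hallow ⟨Finset.univ, by simp, fun ℓ _ => hdvd ℓ⟩
  have hTle : T.card ≤ n := by simpa using Finset.card_le_univ T
  have hsumT : ∑ ℓ ∈ T, ((D / d ℓ : ℕ) : ℤ) * i ℓ = (T.card : ℤ) * D := by
    rw [Finset.sum_congr rfl (fun ℓ hℓ => by rw [hT ℓ hℓ])]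
    have key : ∀ ℓ : Fin n, ((D / d ℓ : ℕ) : ℤ) * (d ℓ : ℤ) = (D : ℤ) := by
      intro ℓ
      rw [← Nat.cast_mul, Nat.div_mul_cancel (hddvd ℓ)]
    rw [Finset.sum_congr rfl (fun ℓ _ => key ℓ), Finset.sum_const, nsmul_eq_mul]
  rw [← Finset.sum_add_sum_compl T, hsumT] at h
  have hcompl : Tᶜ.card = n - T.card := by
    simpa using Finset.card_compl T
  rcases (by omega : T.card = n ∨ T.card = n - 1) with hc | hc
  · have hTc : Tᶜ = ∅ := Finset.card_eq_zero.mp (by omega)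
    rw [hTc, Finset.sum_empty, hc] at h
    have : (D : ℤ) = 0 := by linarith
    exact absurd this (by exact_mod_cast hDpos.ne')
  · have hTc1 : Tᶜ.card = 1 := by omega
    obtain ⟨ℓ₀, hℓ₀⟩ := Finset.card_eq_one.mp hTc1
    rw [hℓ₀, Finset.sum_singleton] at h
    have hcast : (T.card : ℤ) = (n : ℤ) - 1 := by
      rw [hc]; omega
    rw [hcast] at h
    have h0 : ((D / d ℓ₀ : ℕ) : ℤ) * i ℓ₀ = 0 := by linarith
    have hq : (D / d ℓ₀ : ℕ) ≠ 0 := by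
      intro h'
      have := Nat.div_mul_cancel (hddvd ℓ₀)
      rw [h'] at this
      simp at this
      omega
    exact mul_ne_zero (by exact_mod_cast hq) (hi ℓ₀) h0
end

section
/- Let A(i+sM) + d(i'+sM') = ν + sN and B(i'+sM') + d'(i+sM) = ν' + sN' as polynomial identities in s, with A, B, d, d' positive integers and q = dd' − AB > 0. If −ν/N is not a pole of order 2 (i.e., (ν,N) and (i,M) are linearly independent, with N, M such that denominators are nonzero at s = −ν/N), then (1/N)·( q/(ν' + sN') − d/(i + sM) ) evaluated at s = −ν/N equals zero. -/
/-- Part (3) of the splice decomposition theorem: the difference of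
residue contributions vanishes at `s = −ν/N`. -/
theorem stmt19 (A B d d' i i' M M' ν ν' N N' q : ℚ)
    (hA : 0 < A) (hB : 0 < B) (hd : 0 < d) (hd' : 0 < d')
    (hν : ν = A * i + d * i') (hN : N = A * M + d * M')
    (hν' : ν' = B * i' + d' * i) (hN' : N' = B * M' + d' * M)
    (hq : q = d * d' - A * B) (hqpos : 0 < q)
    (hN0 : N ≠ 0)
    (hindep : ν * M - N * i ≠ 0)
    (hindep2 : ν' * N - ν * N' ≠ 0) :
    (1 / N) * (q / (ν' + (-ν / N) * N') - d / (i + (-ν / N) * M)) = 0 := by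
  have h1 : i + (-ν / N) * M ≠ 0 := by
    intro h
    apply hindep
    have := mul_eq_zero_of_left h N
    field_simp at this ⊢
    linarith [this]
  have h2 : ν' + (-ν / N) * N' ≠ 0 := by
    intro h
    apply hindep2
    have := mul_eq_zero_of_left h N
    field_simp at this ⊢
    linarith [this]
  rw [mul_eq_zero]
  right
  rw [sub_eq_zero, div_eq_div_iff h2 h1]
  subst hν hN hν' hN' hq
  field_simp
  ring
end
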